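/- Let H be a finite-dimensional complex Hilbert space. Let f:(0,∞)→(0,∞) be continuous with lim_{ε→0⁺} f(ε)=0, and let g:[0,∞)→[0,∞) be an injective continuous function with g(0)=0; let f₀:[0,∞)→[0,∞) be the continuous extension of f with f₀(0)=0. Then for all density operators A, B on H: AB = 0 if and only if tr g( f₀(B) A f₀(B) ) = 0. -/

import Mathlib

open Matrix
open scoped ComplexOrder

/-- Apply a real function to (the eigenvalues of) a Hermitian matrix via the
spectral decomposition (functional calculus); junk value `0` otherwise. -/
noncomputable def matFun {n : ℕ} (h : ℝ → ℝ) (A : Matrix (Fin n) (Fin n) ℂ) :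
    Matrix (Fin n) (Fin n) ℂ :=
  if hA : A.IsHermitian then hA.cfc h else 0

/-- The (real part of the) trace of a complex matrix. -/
noncomputable def retr {n : ℕ} (M : Matrix (Fin n) (Fin n) ℂ) : ℝ := M.trace.re

/-- Real power of a positive semidefinite matrix via the spectral decomposition. -/
noncomputable def rpowMat {n : ℕ} (A : Matrix (Fin n) (Fin n) ℂ) (r : ℝ) :
    Matrix (Fin n) (Fin n) ℂ := matFun (fun t => t ^ r) A

/-- Density operators: positive semidefinite matrices of trace `1`. -/
def Density (n : ℕ) := {A : Matrix (Fin n) (Fin n) ℂ // A.PosSemidef ∧ A.trace = 1}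

/-- `supp A ⊆ supp B`, i.e. the range of `A` is contained in the range of `B`. -/
def suppLE {n : ℕ} (A B : Matrix (Fin n) (Fin n) ℂ) : Prop :=
  LinearMap.range (Matrix.toLin' A) ≤ LinearMap.range (Matrix.toLin' B)

/-- `supp A ⟂ supp B`: the ranges of `A` and `B` are orthogonal. -/
def suppOrth {n : ℕ} (A B : Matrix (Fin n) (Fin n) ℂ) : Prop :=
  ∀ x y : Fin n → ℂ, star (A.mulVec x) ⬝ᵥ B.mulVec y = 0

/-- The extension `f₀` of `f : (0,∞) → (0,∞)` to `[0,∞)` with `f₀ 0 = 0`. -/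
noncomputable def extZero (f : ℝ → ℝ) : ℝ → ℝ := fun t => if 0 < t then f t else 0

/-- The generalized divergence `D'_{f,g}(A‖B) = tr g(f₀(B) A f₀(B))` (real-valued version,
used when `lim_{ε→0⁺} f(ε) = 0`). -/
noncomputable def Dfg {n : ℕ} (f g : ℝ → ℝ) (A B : Matrix (Fin n) (Fin n) ℂ) : ℝ :=
  retr (matFun g (matFun (extZero f) B * A * matFun (extZero f) B))

open scoped Classical in
/-- The generalized divergence `D'_{f,g}(A‖B)`: equal to `tr g(f₀(B) A f₀(B))` if
`supp A ⊆ supp B` and `∞` otherwise (used when `lim_{ε→0⁺} f(ε) = ∞`). -/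
noncomputable def DfgE {n : ℕ} (f g : ℝ → ℝ) (A B : Matrix (Fin n) (Fin n) ℂ) : EReal :=
  if suppLE A B then ((Dfg f g A B : ℝ) : EReal) else ⊤

open scoped Classical in
/-- The quantum Rényi divergence `D_α(A‖B)` of density operators `A, B`
(with the convention `tr A = 1`), with values in the extended reals. -/
noncomputable def Dalpha {n : ℕ} (α : ℝ) (A B : Matrix (Fin n) (Fin n) ℂ) : EReal :=
  if (α < 1 ∧ ¬ suppOrth A B) ∨ (1 < α ∧ suppLE A B) then
    (((α - 1)⁻¹ * Real.log (retr (rpowMat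
      (rpowMat B ((1 - α) / (2 * α)) * A * rpowMat B ((1 - α) / (2 * α))) α)) : ℝ) : EReal)
  else ⊤

/-- The quantum Rényi divergence on the cone of positive definite matrices
(a finite real number there). -/
noncomputable def DalphaPD {n : ℕ} (α : ℝ) (A B : Matrix (Fin n) (Fin n) ℂ) : ℝ :=
  (α - 1)⁻¹ * Real.log ((retr A)⁻¹ * retr (rpowMat
    (rpowMat B ((1 - α) / (2 * α)) * A * rpowMat B ((1 - α) / (2 * α))) α))

/-- Rank-one (orthogonal) projections: `P = x ⊗ x` for a unit vector `x`. -/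
def IsRankOneProj {n : ℕ} (P : Matrix (Fin n) (Fin n) ℂ) : Prop :=
  ∃ x : Fin n → ℂ, star x ⬝ᵥ x = 1 ∧ P = Matrix.vecMulVec x (star x)

section Aux
variable {n : ℕ}

lemma cfc_isHermitian {M : Matrix (Fin n) (Fin n) ℂ} (hM : M.IsHermitian) (h : ℝ → ℝ) :
    (hM.cfc h).IsHermitian := by
  rw [← hM.cfc_eq]
  exact (cfc_predicate h M : IsSelfAdjoint _)

lemma trace_cfc {M : Matrix (Fin n) (Fin n) ℂ} (hM : M.IsHermitian) (h : ℝ → ℝ) :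
    (hM.cfc h).trace = ∑ i, (h (hM.eigenvalues i) : ℂ) := by
  have hU : (star hM.eigenvectorUnitary.1) * hM.eigenvectorUnitary.1 = 1 :=
    Matrix.mem_unitaryGroup_iff'.mp hM.eigenvectorUnitary.2
  rw [Matrix.IsHermitian.cfc, Unitary.conjStarAlgAut_apply, Matrix.trace_mul_cycle, hU, one_mul, trace_diagonal]
  rfl

lemma mul_cfc_eq_zero {B : Matrix (Fin n) (Fin n) ℂ} (hB : B.PosSemidef)
    (h h' : ℝ → ℝ) (hcond : ∀ x : ℝ, 0 ≤ x → h x = 0 → h' x = 0)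
    {A : Matrix (Fin n) (Fin n) ℂ} (H : A * hB.1.cfc h = 0) : A * hB.1.cfc h' = 0 := by
  set U : Matrix (Fin n) (Fin n) ℂ := hB.1.eigenvectorUnitary.1 with hUdef
  have hU : (star U) * U = 1 := Matrix.mem_unitaryGroup_iff'.mp hB.1.eigenvectorUnitary.2
  have key : (A * U) * diagonal ((RCLike.ofReal : ℝ → ℂ) ∘ h ∘ hB.1.eigenvalues) = 0 := by
    have := congrArg (· * U) H
    simpa [Matrix.IsHermitian.cfc, Unitary.conjStarAlgAut_apply, ← hUdef, mul_assoc, hU] using this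
  have key' : (A * U) * diagonal ((RCLike.ofReal : ℝ → ℂ) ∘ h' ∘ hB.1.eigenvalues) = 0 := by
    ext i j
    have h1 := congrFun (congrFun key i) j
    simp only [Matrix.mul_diagonal, Matrix.zero_apply, Function.comp_apply] at h1 ⊢
    rcases mul_eq_zero.mp h1 with h2 | h2
    · rw [h2, zero_mul]
    · rw [hcond _ (hB.eigenvalues_nonneg j) (by simpa using h2)]
      simp
  rw [Matrix.IsHermitian.cfc, Unitary.conjStarAlgAut_apply, ← mul_assoc, ← mul_assoc, key', zero_mul]

lemma cfc_id_eq {B : Matrix (Fin n) (Fin n) ℂ} (hB : B.IsHermitian) :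
    hB.cfc id = B := by
  rw [Matrix.IsHermitian.cfc]
  exact hB.spectral_theorem.symm

end Aux

/-- For densities `A, B`: `AB = 0` iff `D'_{f,g}(A‖B) = 0`
(case `lim_{ε→0⁺} f(ε) = 0`, `g` injective with `g(0)=0`). -/
theorem stmt15 {n : ℕ}
    (f : ℝ → ℝ) (hf_pos : ∀ x ∈ Set.Ioi (0:ℝ), 0 < f x)
    (hf_cont : ContinuousOn f (Set.Ioi 0))
    (hf_lim : Filter.Tendsto f (nhdsWithin 0 (Set.Ioi 0)) (nhds 0))
    (g : ℝ → ℝ) (hg_nonneg : ∀ x ∈ Set.Ici (0:ℝ), 0 ≤ g x)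
    (hg_cont : ContinuousOn g (Set.Ici 0))
    (hg_inj : Set.InjOn g (Set.Ici 0)) (hg0 : g 0 = 0)
    (A B : Matrix (Fin n) (Fin n) ℂ)
    (hA : A.PosSemidef) (hB : B.PosSemidef) (htA : A.trace = 1) (htB : B.trace = 1) :
    A * B = 0 ↔ Dfg f g A B = 0 := by
  have hBH := hB.1
  have hAH := hA.1
  set F : Matrix (Fin n) (Fin n) ℂ := hBH.cfc (extZero f) with hF
  have hFmat : matFun (extZero f) B = F := by unfold matFun; rw [dif_pos hBH]
  have hFH : F.IsHermitian := cfc_isHermitian hBH _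
  have hcond1 : ∀ x : ℝ, 0 ≤ x → id x = 0 → extZero f x = 0 := by
    intro x _ hx; simp only [id_eq] at hx; simp [extZero, hx]
  have hcond2 : ∀ x : ℝ, 0 ≤ x → extZero f x = 0 → id x = 0 := by
    intro x hx h0
    simp only [id_eq]
    by_contra hne
    have hpos : 0 < x := lt_of_le_of_ne hx (Ne.symm hne)
    rw [extZero, if_pos hpos] at h0
    exact absurd h0 (ne_of_gt (hf_pos x hpos))
  constructor
  · intro hAB
    have hAF : A * F = 0 := by
      refine mul_cfc_eq_zero hB id (extZero f) hcond1 ?_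
      rw [cfc_id_eq hBH]; exact hAB
    have hFA : F * A = 0 := by
      have := congrArg Matrix.conjTranspose hAF
      simpa [Matrix.conjTranspose_mul, hAH.eq, hFH.eq] using this
    have hM0 : F * A * F = 0 := by rw [hFA, Matrix.zero_mul]
    unfold Dfg
    rw [hFmat, hM0]
    have h0H : (0 : Matrix (Fin n) (Fin n) ℂ).IsHermitian := Matrix.isHermitian_zero
    have hmg : matFun g (0 : Matrix (Fin n) (Fin n) ℂ) = h0H.cfc g := by
      unfold matFun; rw [dif_pos h0H]
    rw [hmg, retr, trace_cfc]
    have heig : ∀ i, h0H.eigenvalues i = 0 := by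
      intro i
      rw [Matrix.IsHermitian.eigenvalues_eq]
      simp
    simp [heig, hg0]
  · intro hD
    have hMpsd : (F * A * F).PosSemidef := by
      have := hA.mul_mul_conjTranspose_same F
      rwa [hFH.eq] at this
    unfold Dfg at hD
    rw [hFmat] at hD
    have hMH := hMpsd.1
    have hmg : matFun g (F * A * F) = hMH.cfc g := by unfold matFun; rw [dif_pos hMH]
    rw [hmg, retr, trace_cfc, ← Complex.ofReal_sum, Complex.ofReal_re] at hD
    have heig0 : ∀ i, hMH.eigenvalues i = 0 := by
      intro i
      have hnn : ∀ j ∈ Finset.univ, (0:ℝ) ≤ g (hMH.eigenvalues j) :=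
        fun j _ => hg_nonneg _ (hMpsd.eigenvalues_nonneg j)
      have hz := (Finset.sum_eq_zero_iff_of_nonneg hnn).mp hD i (Finset.mem_univ i)
      exact hg_inj (hMpsd.eigenvalues_nonneg i) Set.self_mem_Ici (hz.trans hg0.symm)
    have hM0 : F * A * F = 0 := by
      have hdg : Matrix.diagonal ((RCLike.ofReal : ℝ → ℂ) ∘ hMH.eigenvalues) = 0 := by
        ext i j
        by_cases hij : i = j <;>
          simp [Matrix.diagonal_apply, hij, heig0]
      conv_lhs => rw [hMH.spectral_theorem]
      rw [hdg, map_zero]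
    obtain ⟨S, hSH, hSS⟩ : ∃ S : Matrix (Fin n) (Fin n) ℂ, S.IsHermitian ∧ S * S = A := by
      open scoped MatrixOrder in
      exact ⟨CFC.sqrt A, (CFC.sqrt_nonneg A).posSemidef.1, CFC.sqrt_mul_sqrt_self A hA.nonneg⟩
    have hSF : S * F = 0 := by
      apply Matrix.conjTranspose_mul_self_eq_zero.mp
      have e1 : (S * F)ᴴ * (S * F) = F * A * F := by
        rw [Matrix.conjTranspose_mul, hFH.eq, hSH.eq, mul_assoc,
          ← mul_assoc S S F, hSS, ← mul_assoc]
      rw [e1, hM0]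
    have hAF : A * F = 0 := by
      rw [← hSS, mul_assoc, hSF, Matrix.mul_zero]
    have := mul_cfc_eq_zero hB (extZero f) id hcond2 hAF
    rwa [cfc_id_eq hBH] at this
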